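/- For a probability distribution (p₁,...,pₙ) and density matrices ρ₁,...,ρₙ on a finite-dimensional Hilbert space, S(∑ᵢ pᵢρᵢ) ≤ ∑ᵢ pᵢ·S(ρᵢ) + H(p), where H(p) = -∑ᵢ pᵢ log₂ pᵢ is the Shannon entropy of the distribution. -/

import Mathlib

open scoped ComplexOrder

/-- Von Neumann entropy (in bits) of a Hermitian matrix, via its eigenvalues. -/
noncomputable def vnEntropy {d : ℕ} {ρ : Matrix (Fin d) (Fin d) ℂ} (h : ρ.IsHermitian) : ℝ :=
  (∑ i, Real.negMulLog (h.eigenvalues i)) / Real.log 2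

/-- Shannon entropy (in bits) of a probability vector. -/
noncomputable def shannonEntropy {n : ℕ} (p : Fin n → ℝ) : ℝ :=
  (∑ i, Real.negMulLog (p i)) / Real.log 2

namespace VNAux

open Matrix Polynomial Real

variable {ι κ : Type*} [Fintype ι] [DecidableEq ι] [Fintype κ] [DecidableEq κ]

lemma charpoly_diag (v : ι → ℂ) : (diagonal v).charpoly = ∏ i, (X - C (v i)) := by
  unfold Matrix.charpoly
  have : charmatrix (diagonal v) = diagonal fun i => X - C (v i) := by
    ext i j
    rcases eq_or_ne i j with rfl | h
    · simp [charmatrix_apply_eq]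
    · simp [charmatrix_apply_ne _ _ _ h, diagonal_apply_ne _ h]
  rw [this, det_diagonal]

lemma charpoly_herm (A : Matrix ι ι ℂ) (hA : A.IsHermitian) :
    A.charpoly = ∏ i, (X - C (hA.eigenvalues i : ℂ)) := by
  have hs := hA.spectral_theorem
  set V : Matrix ι ι ℂ := (hA.eigenvectorUnitary : Matrix ι ι ℂ) with hV
  have hVW : V * star V = 1 := (Matrix.mem_unitaryGroup_iff).mp hA.eigenvectorUnitary.2
  have hWV : star V * V = 1 := (Matrix.mem_unitaryGroup_iff').mp hA.eigenvectorUnitary.2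
  set D : Matrix ι ι ℂ := diagonal (RCLike.ofReal ∘ hA.eigenvalues) with hD
  have key : charmatrix A = V.map C * charmatrix D * (star V).map C := by
    unfold charmatrix
    simp only [RingHom.mapMatrix_apply]
    rw [Matrix.mul_sub, Matrix.sub_mul]
    congr 1
    · have : V.map C * (Matrix.scalar ι (X : ℂ[X])) * (star V).map C
          = (Matrix.scalar ι (X : ℂ[X])) * (V.map C * (star V).map C) := by
        rw [← (scalar_commute (X : ℂ[X]) (fun r => Commute.all _ _) (V.map C)).eq,
          Matrix.mul_assoc]
      rw [this, ← Matrix.map_mul, hVW, Matrix.map_one _ (by simp) (by simp), Matrix.mul_one]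
    · rw [← Matrix.map_mul, ← Matrix.map_mul, hs, Unitary.conjStarAlgAut_apply]
  have : A.charpoly = D.charpoly := by
    unfold Matrix.charpoly
    rw [key, det_mul, det_mul, mul_comm, ← mul_assoc, ← det_mul, ← Matrix.map_mul, hWV,
      Matrix.map_one _ (by simp) (by simp), det_one, one_mul]
  rw [this, hD, charpoly_diag]
  rfl

lemma charpoly_zero' : (0 : Matrix ι ι ℂ).charpoly = X ^ Fintype.card ι := by
  unfold Matrix.charpoly
  have : charmatrix (0 : Matrix ι ι ℂ) = diagonal fun _ => (X : ℂ[X]) := by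
    ext i j
    rcases eq_or_ne i j with rfl | h
    · simp [charmatrix_apply_eq]
    · simp [charmatrix_apply_ne _ _ _ h, diagonal_apply_ne _ h]
  rw [this, det_diagonal, Finset.prod_const, Finset.card_univ]

lemma charpoly_swap (M : Matrix ι κ ℂ) :
    (M * Mᴴ).charpoly * X ^ Fintype.card κ = X ^ Fintype.card ι * (Mᴴ * M).charpoly := by
  set L : Matrix (ι ⊕ κ) (ι ⊕ κ) ℂ := fromBlocks (M * Mᴴ) 0 Mᴴ 0 with hL
  set R : Matrix (ι ⊕ κ) (ι ⊕ κ) ℂ := fromBlocks 0 0 Mᴴ (Mᴴ * M) with hR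
  set S : Matrix (ι ⊕ κ) (ι ⊕ κ) ℂ := fromBlocks 1 M 0 1 with hS
  have hLS : L * S = S * R := by
    rw [hL, hR, hS, fromBlocks_multiply, fromBlocks_multiply]
    simp [Matrix.mul_assoc]
  have hcm : charmatrix L * S.map C = S.map C * charmatrix R := by
    unfold charmatrix
    simp only [RingHom.mapMatrix_apply]
    rw [Matrix.sub_mul, Matrix.mul_sub, ← Matrix.map_mul, ← Matrix.map_mul, hLS]
    congr 1
    exact (scalar_commute (X : ℂ[X]) (fun r => Commute.all _ _) (S.map C)).eq
  have hdetS : (S.map C).det = 1 := by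
    rw [hS]
    have : (fromBlocks 1 M 0 1 : Matrix (ι ⊕ κ) (ι ⊕ κ) ℂ).map C
        = fromBlocks ((1 : Matrix ι ι ℂ).map C) (M.map C) ((0 : Matrix κ ι ℂ).map C)
          ((1 : Matrix κ κ ℂ).map C) := by
      ext (i|i) (j|j) <;> rfl
    rw [this, Matrix.map_one _ (by simp) (by simp), Matrix.map_one _ (by simp) (by simp),
      Matrix.map_zero _ (by simp), det_fromBlocks_zero₂₁, det_one, det_one, one_mul]
  have hcp : L.charpoly = R.charpoly := by
    have := congrArg det hcm
    rwa [det_mul, det_mul, hdetS, mul_one, one_mul] at this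
  rw [hL, hR] at hcp
  rw [charpoly_fromBlocks_zero₁₂, charpoly_fromBlocks_zero₁₂] at hcp
  rwa [charpoly_zero', charpoly_zero'] at hcp

lemma roots_herm (A : Matrix ι ι ℂ) (hA : A.IsHermitian) :
    A.charpoly.roots = Finset.univ.val.map (fun i => (hA.eigenvalues i : ℂ)) := by
  rw [charpoly_herm A hA, ← Polynomial.roots_multiset_prod_X_sub_C
    (Finset.univ.val.map (fun i => (hA.eigenvalues i : ℂ)))]
  congr 1
  rw [Multiset.map_map, Finset.prod_eq_multiset_prod]
  rfl

lemma sum_negMulLog_swap (M : Matrix ι κ ℂ)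
    (h1 : (M * Mᴴ).IsHermitian) (h2 : (Mᴴ * M).IsHermitian) :
    ∑ i, negMulLog (h1.eigenvalues i) = ∑ k, negMulLog (h2.eigenvalues k) := by
  have hroots : (M * Mᴴ).charpoly.roots + (X ^ Fintype.card κ : ℂ[X]).roots
      = (X ^ Fintype.card ι : ℂ[X]).roots + (Mᴴ * M).charpoly.roots := by
    rw [← Polynomial.roots_mul (by
        exact mul_ne_zero (M * Mᴴ).charpoly_monic.ne_zero (pow_ne_zero _ X_ne_zero)),
      ← Polynomial.roots_mul (by
        exact mul_ne_zero (pow_ne_zero _ X_ne_zero) (Mᴴ * M).charpoly_monic.ne_zero),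
      charpoly_swap]
  rw [roots_herm _ h1, roots_herm _ h2, Polynomial.roots_X_pow, Polynomial.roots_X_pow] at hroots
  have := congrArg (fun s : Multiset ℂ => ((s.map (fun z => negMulLog z.re)).sum)) hroots
  simp only [Multiset.map_add, Multiset.sum_add, Multiset.map_map, Function.comp] at this
  have hz : ∀ m : ℕ, ((m • ({0} : Multiset ℂ)).map (fun z => negMulLog z.re)).sum = 0 := by
    intro m
    rw [Multiset.map_nsmul, Multiset.sum_nsmul]
    simp
  rw [hz, hz, add_zero, zero_add] at this
  simp only [Complex.ofReal_re] at this
  rw [Finset.sum, Finset.sum]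
  exact this

lemma sum_negMulLog_eig_le_diag (B : Matrix κ κ ℂ) (hB : B.PosSemidef) :
    ∑ k, negMulLog (hB.1.eigenvalues k) ≤ ∑ j, negMulLog (B j j).re := by
  classical
  set hA := hB.1
  set V : Matrix κ κ ℂ := (hA.eigenvectorUnitary : Matrix κ κ ℂ) with hV
  have hVW : V * star V = 1 := (Matrix.mem_unitaryGroup_iff).mp hA.eigenvectorUnitary.2
  have hWV : star V * V = 1 := (Matrix.mem_unitaryGroup_iff').mp hA.eigenvectorUnitary.2
  set w : κ → κ → ℝ := fun j k => Complex.normSq (V j k) with hw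
  have hdiag : ∀ j, (B j j).re = ∑ k, w j k * hA.eigenvalues k := by
    intro j
    conv_lhs => rw [hA.spectral_theorem, Unitary.conjStarAlgAut_apply]
    rw [Matrix.mul_apply]
    rw [Complex.re_sum]
    refine Finset.sum_congr rfl fun k _ => ?_
    rw [Matrix.mul_apply, Finset.sum_mul]
    rw [Complex.re_sum]
    rw [Finset.sum_eq_single k]
    · simp only [diagonal_apply_eq, Function.comp_apply]
      have : V j k * (hA.eigenvalues k : ℂ) * (star V) k j
          = ((w j k * hA.eigenvalues k : ℝ) : ℂ) := by
        rw [Matrix.star_apply, hw]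
        simp only [RCLike.star_def]
        push_cast
        rw [mul_comm (V j k) ((hA.eigenvalues k : ℂ)), mul_assoc, Complex.mul_conj]
        ring
      show (V j k * (hA.eigenvalues k : ℂ) * (star V) k j).re = w j k * hA.eigenvalues k
      rw [this, Complex.ofReal_re]
    · intro b _ hbk
      simp [diagonal_apply_ne _ hbk]
    · simp
  have hrow : ∀ j, ∑ k, w j k = 1 := by
    intro j
    have := congrArg (fun N => (N j j).re) hVW
    simp only [Matrix.mul_apply, Matrix.one_apply_eq, Complex.re_sum, Complex.one_re] at this
    rw [← this]
    refine Finset.sum_congr rfl fun k _ => ?_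
    rw [Matrix.star_apply, hw]
    simp only [RCLike.star_def, Complex.mul_conj]
    simp
  have hcol : ∀ k, ∑ j, w j k = 1 := by
    intro k
    have := congrArg (fun N => (N k k).re) hWV
    simp only [Matrix.mul_apply, Matrix.one_apply_eq, Complex.re_sum, Complex.one_re] at this
    rw [← this]
    refine Finset.sum_congr rfl fun j _ => ?_
    rw [Matrix.star_apply, hw]
    simp only [RCLike.star_def, mul_comm _ (V j k), Complex.mul_conj]
    simp [Complex.normSq_apply]
  have hconc : ∀ j, ∑ k, w j k * negMulLog (hA.eigenvalues k) ≤ negMulLog ((B j j).re) := by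
    intro j
    rw [hdiag j]
    have := Real.concaveOn_negMulLog.le_map_sum
      (t := Finset.univ) (w := w j) (p := fun k => hA.eigenvalues k)
      (fun k _ => Complex.normSq_nonneg _) (hrow j)
      (fun k _ => hB.eigenvalues_nonneg k)
    simpa [smul_eq_mul] using this
  calc ∑ k, negMulLog (hA.eigenvalues k)
      = ∑ k, (∑ j, w j k) * negMulLog (hA.eigenvalues k) := by
        refine Finset.sum_congr rfl fun k _ => ?_; rw [hcol k, one_mul]
    _ = ∑ j, ∑ k, w j k * negMulLog (hA.eigenvalues k) := by
        rw [Finset.sum_comm]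
        simp_rw [Finset.sum_mul]
    _ ≤ ∑ j, negMulLog (B j j).re := Finset.sum_le_sum fun j _ => hconc j

lemma eig_congr {A B : Matrix ι ι ℂ} (h : A = B) (hA : A.IsHermitian) (hB : B.IsHermitian) :
    ∑ i, negMulLog (hA.eigenvalues i) = ∑ i, negMulLog (hB.eigenvalues i) := by
  subst h; rfl

end VNAux

theorem vnEntropy_mix_le {n d : ℕ} (p : Fin n → ℝ) (ρ : Fin n → Matrix (Fin d) (Fin d) ℂ)
    (hp : ∀ i, 0 ≤ p i) (hp1 : ∑ i, p i = 1)
    (hρ : ∀ i, (ρ i).PosSemidef) (htr : ∀ i, (ρ i).trace = 1)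
    (hmix : (∑ i, (p i : ℂ) • ρ i).IsHermitian) :
    vnEntropy hmix ≤ ∑ i, p i * vnEntropy (hρ i).isHermitian + shannonEntropy p := by
  classical
  open Matrix Real in
  have hlog2 : (0:ℝ) < Real.log 2 := Real.log_pos (by norm_num)
  -- abbreviations
  let lam : Fin n → Fin d → ℝ := fun i j => ((hρ i).isHermitian).eigenvalues j
  let V : Fin n → Matrix (Fin d) (Fin d) ℂ :=
    fun i => (((hρ i).isHermitian).eigenvectorUnitary : Matrix (Fin d) (Fin d) ℂ)
  have hlamnn : ∀ i j, 0 ≤ lam i j := fun i j => (hρ i).eigenvalues_nonneg j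
  have hwnn : ∀ q : Fin n × Fin d, 0 ≤ p q.1 * lam q.1 q.2 :=
    fun q => mul_nonneg (hp q.1) (hlamnn q.1 q.2)
  let M : Matrix (Fin d) (Fin n × Fin d) ℂ :=
    fun x q => ((Real.sqrt (p q.1 * lam q.1 q.2) : ℝ) : ℂ) * V q.1 x q.2
  -- entries of ρ i via spectral theorem
  have hent : ∀ i x y, ρ i x y = ∑ j, V i x j * ((lam i j : ℝ) : ℂ) * star (V i y j) := by
    intro i x y
    conv_lhs => rw [((hρ i).isHermitian).spectral_theorem, Unitary.conjStarAlgAut_apply]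
    rw [Matrix.mul_apply]
    refine Finset.sum_congr rfl fun j _ => ?_
    rw [Matrix.mul_diagonal, Matrix.star_apply]
    rfl
  have hMM : M * Mᴴ = ∑ i, (p i : ℂ) • ρ i := by
    ext x y
    rw [Matrix.mul_apply, Matrix.sum_apply]
    rw [Fintype.sum_prod_type]
    refine Finset.sum_congr rfl fun i _ => ?_
    rw [Matrix.smul_apply, hent i x y, Finset.smul_sum]
    refine Finset.sum_congr rfl fun j _ => ?_
    rw [Matrix.conjTranspose_apply]
    show ((Real.sqrt (p i * lam i j) : ℝ) : ℂ) * V i x j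
        * star (((Real.sqrt (p i * lam i j) : ℝ) : ℂ) * V i y j)
      = (p i : ℂ) • (V i x j * ((lam i j : ℝ) : ℂ) * star (V i y j))
    have hsq : ((Real.sqrt (p i * lam i j) : ℝ) : ℂ) * ((Real.sqrt (p i * lam i j) : ℝ) : ℂ)
        = ((p i : ℝ) : ℂ) * ((lam i j : ℝ) : ℂ) := by
      rw [← Complex.ofReal_mul, Real.mul_self_sqrt (hwnn ⟨i, j⟩), Complex.ofReal_mul]
    have hst : star (((Real.sqrt (p i * lam i j) : ℝ) : ℂ) * V i y j)
        = ((Real.sqrt (p i * lam i j) : ℝ) : ℂ) * star (V i y j) := by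
      rw [star_mul', RCLike.star_def, Complex.conj_ofReal]
    rw [hst, smul_eq_mul]
    linear_combination (V i x j * star (V i y j)) * hsq
  have hBdiag : ∀ q : Fin n × Fin d, ((Mᴴ * M) q q).re = p q.1 * lam q.1 q.2 := by
    intro q
    have hsum : ∑ x, star (V q.1 x q.2) * V q.1 x q.2 = 1 := by
      have hWV : star (V q.1) * V q.1 = 1 :=
        Matrix.mem_unitaryGroup_iff'.mp (((hρ q.1).isHermitian).eigenvectorUnitary).2
      have := congrArg (fun N => N q.2 q.2) hWV
      simpa [Matrix.mul_apply, Matrix.star_apply] using this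
    have : (Mᴴ * M) q q = ((p q.1 * lam q.1 q.2 : ℝ) : ℂ) := by
      rw [Matrix.mul_apply]
      have : ∀ x, Mᴴ q x * M x q
          = ((p q.1 * lam q.1 q.2 : ℝ) : ℂ) * (star (V q.1 x q.2) * V q.1 x q.2) := by
        intro x
        rw [Matrix.conjTranspose_apply]
        show star (((Real.sqrt (p q.1 * lam q.1 q.2) : ℝ) : ℂ) * V q.1 x q.2)
            * (((Real.sqrt (p q.1 * lam q.1 q.2) : ℝ) : ℂ) * V q.1 x q.2)
          = ((p q.1 * lam q.1 q.2 : ℝ) : ℂ) * (star (V q.1 x q.2) * V q.1 x q.2)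
        have hsq : ((Real.sqrt (p q.1 * lam q.1 q.2) : ℝ) : ℂ)
              * ((Real.sqrt (p q.1 * lam q.1 q.2) : ℝ) : ℂ)
            = ((p q.1 * lam q.1 q.2 : ℝ) : ℂ) := by
          rw [← Complex.ofReal_mul, Real.mul_self_sqrt (hwnn q)]
        have hst : star (((Real.sqrt (p q.1 * lam q.1 q.2) : ℝ) : ℂ) * V q.1 x q.2)
            = ((Real.sqrt (p q.1 * lam q.1 q.2) : ℝ) : ℂ) * star (V q.1 x q.2) := by
          rw [star_mul', RCLike.star_def, Complex.conj_ofReal]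
        rw [hst]
        linear_combination (star (V q.1 x q.2) * V q.1 x q.2) * hsq
      rw [Finset.sum_congr rfl fun x _ => this x, ← Finset.mul_sum, hsum, mul_one]
    rw [this, Complex.ofReal_re]
  -- hermitian facts
  have hPSD : (Mᴴ * M).PosSemidef := Matrix.posSemidef_conjTranspose_mul_self M
  have h1 : (M * Mᴴ).IsHermitian := Matrix.isHermitian_mul_conjTranspose_self M
  have h2 : (Mᴴ * M).IsHermitian := hPSD.1
  -- sum over lam rows is 1
  have hsumlam : ∀ i, ∑ j, lam i j = 1 := by
    intro i
    have htr' : (ρ i).trace = ((∑ j, lam i j : ℝ) : ℂ) := by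
      conv_lhs => rw [((hρ i).isHermitian).spectral_theorem, Unitary.conjStarAlgAut_apply]
      rw [Matrix.trace_mul_cycle]
      rw [Matrix.mem_unitaryGroup_iff'.mp (((hρ i).isHermitian).eigenvectorUnitary).2, one_mul]
      rw [Matrix.trace_diagonal]
      push_cast
      rfl
    have := (htr i).symm.trans htr'
    exact_mod_cast this.symm
  -- core inequality
  have key : ∑ k, Real.negMulLog (hmix.eigenvalues k)
      ≤ ∑ i, Real.negMulLog (p i) + ∑ i, p i * ∑ j, Real.negMulLog (lam i j) := by
    have e1 : ∑ k, Real.negMulLog (hmix.eigenvalues k)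
        = ∑ k, Real.negMulLog (h1.eigenvalues k) := VNAux.eig_congr hMM.symm hmix h1
    have e2 := VNAux.sum_negMulLog_swap M h1 h2
    have e3 := VNAux.sum_negMulLog_eig_le_diag (Mᴴ * M) hPSD
    have e4 : ∑ q : Fin n × Fin d, Real.negMulLog (((Mᴴ * M) q q).re)
        = ∑ i, Real.negMulLog (p i) + ∑ i, p i * ∑ j, Real.negMulLog (lam i j) := by
      rw [Finset.sum_congr rfl fun q _ => congrArg Real.negMulLog (hBdiag q)]
      rw [Fintype.sum_prod_type]
      rw [← Finset.sum_add_distrib]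
      refine Finset.sum_congr rfl fun i _ => ?_
      have : ∀ j, Real.negMulLog (p i * lam i j)
          = lam i j * Real.negMulLog (p i) + p i * Real.negMulLog (lam i j) :=
        fun j => Real.negMulLog_mul (p i) (lam i j)
      rw [Finset.sum_congr rfl fun j _ => this j, Finset.sum_add_distrib,
        ← Finset.sum_mul, hsumlam i, one_mul, ← Finset.mul_sum]
    calc ∑ k, Real.negMulLog (hmix.eigenvalues k)
        = ∑ q : Fin n × Fin d, Real.negMulLog (h2.eigenvalues q) := by rw [e1, e2]
      _ ≤ ∑ q : Fin n × Fin d, Real.negMulLog (((Mᴴ * M) q q).re) := e3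
      _ = _ := e4
  -- conclude
  unfold vnEntropy shannonEntropy
  have rhs_eq : ∑ i, p i * ((∑ j, Real.negMulLog (((hρ i).isHermitian).eigenvalues j))
        / Real.log 2) + (∑ i, Real.negMulLog (p i)) / Real.log 2
      = (∑ i, Real.negMulLog (p i) + ∑ i, p i * ∑ j, Real.negMulLog (lam i j))
        / Real.log 2 := by
    rw [add_div, add_comm]
    congr 1
    rw [Finset.sum_div]
    refine Finset.sum_congr rfl fun i _ => ?_
    rw [mul_div_assoc]
  rw [rhs_eq]
  exact div_le_div_of_nonneg_right key hlog2.le
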